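/- In the positive braid monoid B_n⁺, for all n ≥ 2 and d ≥ 1, Δ_n^d = \widehat{Δ}_{n,d} · Δ_{n-1}^d, where \widehat{Δ}_{n,d} = Φ_n^{d+1}(δ_n)···Φ_n²(δ_n)·Φ_n(δ_n) with δ_n = σ_{n-1}···σ₁. -/

import Mathlib

/-- The braid relations on the free monoid over `Fin N`
(generator `i : Fin N` stands for `σ_{i+1}`). -/
def braidRel (N : ℕ) : FreeMonoid (Fin N) → FreeMonoid (Fin N) → Prop := fun a b =>
  (∃ i j : Fin N, ((i : ℕ) + 2 ≤ (j : ℕ) ∨ (j : ℕ) + 2 ≤ (i : ℕ)) ∧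
      a = FreeMonoid.of i * FreeMonoid.of j ∧ b = FreeMonoid.of j * FreeMonoid.of i) ∨
  (∃ i j : Fin N, ((i : ℕ) + 1 = (j : ℕ) ∨ (j : ℕ) + 1 = (i : ℕ)) ∧
      a = FreeMonoid.of i * FreeMonoid.of j * FreeMonoid.of i ∧
      b = FreeMonoid.of j * FreeMonoid.of i * FreeMonoid.of j)

def braidCon (N : ℕ) : Con (FreeMonoid (Fin N)) := conGen (braidRel N)

/-- The positive braid monoid on `N+1` strands `B_{N+1}⁺`,
with generators `σ_1, …, σ_N` indexed by `Fin N`. -/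
abbrev PosBraid (N : ℕ) := (braidCon N).Quotient

/-- The generator `σ_{i+1}` of the positive braid monoid. -/
def sigma {N : ℕ} (i : Fin N) : PosBraid N := (braidCon N).mk' (FreeMonoid.of i)

/-- The flip automorphism `Φ_{N+1} : σ_i ↦ σ_{N+1-i}`. -/
def flipH (N : ℕ) : PosBraid N →* PosBraid N :=
  Con.lift _ ((braidCon N).mk'.comp (FreeMonoid.map Fin.rev)) <| by
    apply Con.conGen_le.mpr
    rintro a b (⟨i, j, hij, rfl, rfl⟩ | ⟨i, j, hij, rfl, rfl⟩) <;>
      simp only [Con.ker_rel, MonoidHom.comp_apply, map_mul, FreeMonoid.map_of] <;>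
      refine (Con.eq _).mpr (ConGen.Rel.of _ _ ?_)
    · exact Or.inl ⟨Fin.rev i, Fin.rev j, by
        simp only [Fin.val_rev]; omega, rfl, rfl⟩
    · exact Or.inr ⟨Fin.rev i, Fin.rev j, by
        simp only [Fin.val_rev]; omega, rfl, rfl⟩

/-- The inclusion `B_{N+1}⁺ → B_{N+2}⁺`. -/
def incl (N : ℕ) : PosBraid N →* PosBraid (N + 1) :=
  Con.lift _ ((braidCon (N + 1)).mk'.comp (FreeMonoid.map Fin.castSucc)) <| by
    apply Con.conGen_le.mpr
    rintro a b (⟨i, j, hij, rfl, rfl⟩ | ⟨i, j, hij, rfl, rfl⟩) <;>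
      simp only [Con.ker_rel, MonoidHom.comp_apply, map_mul, FreeMonoid.map_of] <;>
      refine (Con.eq _).mpr (ConGen.Rel.of _ _ ?_)
    · exact Or.inl ⟨i.castSucc, j.castSucc, by simpa using hij, rfl, rfl⟩
    · exact Or.inr ⟨i.castSucc, j.castSucc, by simpa using hij, rfl, rfl⟩

/-- Product `f^{p-1}(x_p) ⋯ f(x_2) · x_1` of the list `[x_p, …, x_1]`,
where each entry is twisted by an iterate of `f`. -/
def prodFlip {M : Type*} [Monoid M] (f : M → M) : List M → M
  | [] => 1
  | a :: t => f^[t.length] a * prodFlip f t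

/-- `l = [x_p, …, x_1]` (a list of elements of `B_{k+1}⁺`) is the `(k+2)`-splitting of
`x ∈ B_{k+2}⁺` : `x = Φ^{p-1}(x_p) ⋯ Φ(x_2)·x_1`, the leading entry is non-trivial, and
for every `r ≥ 2` the only generator `σ_i` right-dividing `Φ^{p-r}(x_p) ⋯ Φ(x_{r+1})·x_r`
is `σ_1`. -/
def IsSplit {k : ℕ} (x : PosBraid (k + 1)) (l : List (PosBraid k)) : Prop :=
  x = prodFlip (⇑(flipH (k + 1))) (l.map (incl k)) ∧
  l.head? ≠ some 1 ∧
  ∀ j, 1 ≤ j → j < l.length →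
    (∃ z, prodFlip (⇑(flipH (k + 1))) ((l.take j).map (incl k)) =
        z * sigma (⟨0, Nat.succ_pos k⟩ : Fin (k + 1))) ∧
    ∀ i : Fin (k + 1),
      (∃ z, prodFlip (⇑(flipH (k + 1))) ((l.take j).map (incl k)) = z * sigma i) →
      i = (⟨0, Nat.succ_pos k⟩ : Fin (k + 1))

/-- `σ_{i+1}` as an element of `B_{N+1}⁺`, extended by `1` for out-of-range indices. -/
def sigmaP (N : ℕ) (i : ℕ) : PosBraid N := if h : i < N then sigma ⟨i, h⟩ else 1

/-- `δ_{N+1} = σ_N σ_{N-1} ⋯ σ_1` in `B_{N+1}⁺`. -/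
def deltaFull (N : ℕ) : PosBraid N := ((List.ofFn (sigma (N := N))).reverse).prod

/-- `Δ_m` (the Garside element of `B_m⁺`), viewed inside `B_{N+1}⁺`,
via `Δ_1 = 1` and `Δ_{m+1} = σ_1 ⋯ σ_m · Δ_m`. -/
def DeltaP (N : ℕ) : ℕ → PosBraid N
  | 0 => 1
  | m + 1 => ((List.range m).map (sigmaP N)).prod * DeltaP N m

/-- `\widehatΔ_{N+1,d} = Φ^d(δ_{N+1}) ⋯ Φ²(δ_{N+1}) · Φ(δ_{N+1})` (`d` factors). -/
def hatDelta (N : ℕ) (d : ℕ) : PosBraid N :=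
  ((List.range d).map (fun j => (⇑(flipH N))^[d - j] (deltaFull N))).prod

/-- ShortLex extension of a relation: compare lists first by length,
then lexicographically (from the left). -/
def SL {α : Type*} (r : α → α → Prop) (s t : List α) : Prop :=
  s.length < t.length ∨ (s.length = t.length ∧ List.Lex r s t)

/-- The ordering `<⁺` of `B_{k+1}⁺`, defined recursively: on `B_2⁺` it is the comparison
of exponents of `σ_1`; on `B_{k+2}⁺` it is the ShortLex comparison of `(k+2)`-splittings,
entries being compared by `<⁺` on `B_{k+1}⁺`. -/
def ordP : (k : ℕ) → PosBraid k → PosBraid k → Prop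
  | 0 => fun _ _ => False
  | 1 => fun x y => ∃ p q : ℕ, x = sigma (0 : Fin 1) ^ p ∧ y = sigma (0 : Fin 1) ^ q ∧ p < q
  | (k + 2) => fun x y => ∃ lx ly : List (PosBraid (k + 1)),
      IsSplit x lx ∧ IsSplit y ly ∧ SL (ordP (k + 1)) lx ly

namespace Dev
variable {N : ℕ}

/-- induction principle -/
lemma braid_ind {P : PosBraid N → Prop} (h1 : P 1)
    (hgen : ∀ i : Fin N, P (sigma i))
    (hmul : ∀ x y, P x → P y → P (x * y)) : ∀ x, P x := by
  intro x
  obtain ⟨w, rfl⟩ := Con.mk'_surjective x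
  induction w using FreeMonoid.inductionOn with
  | one => simpa using h1
  | of i => exact hgen i
  | mul a b ha hb => rw [map_mul]; exact hmul _ _ ha hb


lemma sigmaP_lt (a : ℕ) (h : a < N) : sigmaP N a = sigma ⟨a, h⟩ := dif_pos h

lemma sig_comm (a b : ℕ) (h : a + 2 ≤ b) :
    sigmaP N a * sigmaP N b = sigmaP N b * sigmaP N a := by
  unfold sigmaP
  by_cases hb : b < N
  · have ha : a < N := by omega
    rw [dif_pos ha, dif_pos hb]
    refine (Con.eq _).mpr (ConGen.Rel.of _ _ (Or.inl ⟨⟨a, ha⟩, ⟨b, hb⟩, Or.inl h, rfl, rfl⟩))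
  · rw [dif_neg hb, mul_one, one_mul]

lemma sig_braid (a : ℕ) (h : a + 1 < N) :
    sigmaP N a * sigmaP N (a + 1) * sigmaP N a
      = sigmaP N (a + 1) * sigmaP N a * sigmaP N (a + 1) := by
  have ha : a < N := by omega
  rw [sigmaP_lt a ha, sigmaP_lt (a+1) h]
  refine (Con.eq _).mpr (ConGen.Rel.of _ _ (Or.inr ⟨⟨a, ha⟩, ⟨a+1, h⟩, Or.inl rfl, rfl, rfl⟩))

/-- `W m = σ_0 ⋯ σ_{m-1}` -/
def W (N m : ℕ) : PosBraid N := ((List.range m).map (sigmaP N)).prod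
/-- `U m = σ_{m-1} ⋯ σ_0` -/
def U (N m : ℕ) : PosBraid N := (((List.range m).map (sigmaP N)).reverse).prod

lemma W_succ (m : ℕ) : W N (m + 1) = W N m * sigmaP N m := by
  simp [W, List.range_succ]

lemma U_succ (m : ℕ) : U N (m + 1) = sigmaP N m * U N m := by
  simp [U, List.range_succ]

lemma W_zero : W N 0 = 1 := rfl
lemma U_zero : U N 0 = 1 := rfl

lemma DeltaP_succ (m : ℕ) : DeltaP N (m + 1) = W N m * DeltaP N m := rfl

lemma sig_comm_W (j m : ℕ) (h : m + 1 ≤ j) :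
    sigmaP N j * W N m = W N m * sigmaP N j := by
  induction m with
  | zero => simp [W_zero]
  | succ m ih =>
      rw [W_succ, ← mul_assoc, ih (by omega), mul_assoc,
        ← sig_comm m j (by omega), mul_assoc]

lemma sig_comm_U (j m : ℕ) (h : m + 1 ≤ j) :
    sigmaP N j * U N m = U N m * sigmaP N j := by
  induction m with
  | zero => simp [U_zero]
  | succ m ih =>
      rw [U_succ, ← mul_assoc, ← sig_comm m j (by omega), mul_assoc, ih (by omega),
        ← mul_assoc]

lemma sig_comm_Delta (j m : ℕ) (h : m ≤ j) :
    sigmaP N j * DeltaP N m = DeltaP N m * sigmaP N j := by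
  induction m with
  | zero => show sigmaP N j * 1 = 1 * sigmaP N j; rw [mul_one, one_mul]
  | succ m ih =>
      rw [DeltaP_succ, ← mul_assoc, sig_comm_W j m (by omega), mul_assoc, ih (by omega),
        ← mul_assoc]

lemma key_W (i m : ℕ) (hm : i + 2 ≤ m) (hN : m ≤ N) :
    sigmaP N (i + 1) * W N m = W N m * sigmaP N i := by
  induction m with
  | zero => omega
  | succ m ih =>
      rcases Nat.lt_or_ge (i + 2) (m + 1) with hlt | hge
      · rw [W_succ, ← mul_assoc, ih (by omega) (by omega), mul_assoc,
          sig_comm i m (by omega), mul_assoc]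
      · have hmi : m = i + 1 := by omega
        subst hmi
        rw [W_succ, W_succ, ← mul_assoc, ← mul_assoc, sig_comm_W (i+1) i (by omega)]
        -- W i * σ_{i+1} * σ_i * σ_{i+1} = W i * σ_i * σ_{i+1} * σ_i
        rw [mul_assoc, mul_assoc, mul_assoc, mul_assoc]
        congr 1
        have hb := sig_braid (N := N) i (by omega)
        simp only [mul_assoc] at hb
        exact hb.symm

/-- second formula for Delta -/
lemma DeltaP_succ' (m : ℕ) : DeltaP N (m + 1) = DeltaP N m * U N m := by
  induction m with
  | zero => show W N 0 * 1 = 1 * U N 0; rfl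
  | succ m ih =>
      calc DeltaP N (m+2) = W N (m+1) * DeltaP N (m+1) := DeltaP_succ _
        _ = W N m * sigmaP N m * (DeltaP N m * U N m) := by rw [W_succ, ih]
        _ = W N m * DeltaP N m * (sigmaP N m * U N m) := by
            rw [mul_assoc, mul_assoc, ← mul_assoc (sigmaP N m),
              sig_comm_Delta m m le_rfl, mul_assoc]
        _ = DeltaP N (m+1) * U N (m+1) := by rw [← DeltaP_succ, ← U_succ]

lemma key_Delta : ∀ m, ∀ i, i + 2 ≤ m → m ≤ N + 1 →
    sigmaP N i * DeltaP N m = DeltaP N m * sigmaP N (m - 2 - i) := by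
  intro m
  induction m using Nat.strong_induction_on with
  | _ m IH =>
  intro i hm hN
  match m, hm with
  | m + 2, _ =>
  rcases i with _ | i'
  · -- i = 0
    rcases m with _ | m'
    · -- m = 2
      have h2 : DeltaP N 2 = sigmaP N 0 := by
        rw [DeltaP_succ, DeltaP_succ, W_succ, W_zero]
        show 1 * sigmaP N 0 * (1 * (1 : PosBraid N)) = sigmaP N 0
        simp
      show sigmaP N 0 * DeltaP N 2 = DeltaP N 2 * sigmaP N (0 + 2 - 2 - 0)
      rw [h2]
    · -- m+2 = m'+3
      have hU : sigmaP N (m' + 2 - 2 - 0) * U N (m' + 2)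
          = U N (m' + 2) * sigmaP N (m' + 1) := by
        show sigmaP N m' * U N (m' + 2) = U N (m' + 2) * sigmaP N (m' + 1)
        rw [U_succ, U_succ, ← mul_assoc, ← mul_assoc, sig_braid m' (by omega),
          mul_assoc, mul_assoc, sig_comm_U (m'+1) m' (by omega)]
        simp only [mul_assoc]
      rw [DeltaP_succ' (m' + 2), ← mul_assoc,
        IH (m' + 2) (by omega) 0 (by omega) (by omega),
        mul_assoc, hU, ← mul_assoc, ← DeltaP_succ']
      have harith : m' + 1 + 2 - 2 - 0 = m' + 1 := by omega
      rw [harith]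
  · -- i = i' + 1
    rw [DeltaP_succ, ← mul_assoc, key_W i' (m+1) (by omega) (by omega), mul_assoc,
      IH (m+1) (by omega) i' (by omega) (by omega), ← mul_assoc, ← DeltaP_succ]
    congr 2
    omega


lemma sigma_eq (i : Fin N) : sigma i = sigmaP N i := by simp [sigmaP]

lemma flip_sigma (i : Fin N) : flipH N (sigma i) = sigma i.rev := by
  simp [flipH, sigma, Con.lift_mk']
  rfl

lemma flip_flip (x : PosBraid N) : flipH N (flipH N x) = x := by
  induction x using braid_ind with
  | h1 => simp
  | hgen i => rw [flip_sigma, flip_sigma, Fin.rev_rev]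
  | hmul x y hx hy => rw [map_mul, map_mul, hx, hy]

lemma conj (x : PosBraid N) :
    DeltaP N (N + 1) * flipH N x = x * DeltaP N (N + 1) := by
  induction x using braid_ind with
  | h1 => simp
  | hgen i =>
      rw [flip_sigma, sigma_eq, sigma_eq]
      have := key_Delta (N := N) (N + 1) (i : ℕ) (by omega) le_rfl
      have harith : (N + 1 - 2 - (i : ℕ)) = (i.rev : ℕ) := by
        have := i.isLt; simp only [Fin.val_rev]; omega
      rw [this, harith]
  | hmul x y hx hy =>
      rw [map_mul, ← mul_assoc, hx, mul_assoc, hy, ← mul_assoc]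

lemma conj' (x : PosBraid N) :
    DeltaP N (N + 1) * x = flipH N x * DeltaP N (N + 1) := by
  conv_lhs => rw [← flip_flip x]
  exact conj _

lemma range_map_sigmaP : (List.range N).map (sigmaP N) = List.ofFn (sigma (N := N)) := by
  apply List.ext_getElem
  · simp
  · intro n h1 h2
    simp only [List.getElem_map, List.getElem_range, List.getElem_ofFn]
    exact sigmaP_lt n (by simpa using h2)

lemma deltaFull_eq_U : deltaFull N = U N N := by
  rw [deltaFull, U, range_map_sigmaP]

lemma flip_deltaFull : flipH N (deltaFull N) = W N N := by
  rw [deltaFull, W, range_map_sigmaP, map_list_prod, List.map_reverse, List.map_ofFn]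
  have : (List.ofFn ((flipH N) ∘ sigma (N := N))).reverse = List.ofFn (sigma (N := N)) := by
    have h1 : (flipH N) ∘ sigma (N := N) = fun i => sigma i.rev := by
      funext i; exact flip_sigma i
    rw [h1]
    apply List.ext_getElem
    · simp
    · intro n h1 h2
      rw [List.getElem_reverse]
      simp only [List.getElem_ofFn, List.length_ofFn]
      congr 1
      apply Fin.ext
      simp only [Fin.val_rev]
      have hn : n < N := by simpa using h2
      omega
  rw [this]

lemma Delta_top : DeltaP N (N + 1) = flipH N (deltaFull N) * DeltaP N N := by
  rw [flip_deltaFull]; rfl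

lemma hatDelta_one : hatDelta N 1 = flipH N (deltaFull N) := by
  rw [hatDelta]
  show ((List.range 1).map fun j => (⇑(flipH N))^[1 - j] (deltaFull N)).prod = _
  rw [List.range_succ]
  simp

lemma hatDelta_succ (d : ℕ) (hd : 1 ≤ d) :
    hatDelta N (d + 1) = flipH N (hatDelta N d) * flipH N (deltaFull N) := by
  rw [hatDelta, hatDelta, List.range_succ, List.map_append, List.prod_append,
    map_list_prod, List.map_map]
  congr 1
  · congr 1
    apply List.map_congr_left
    intro j hj
    have hj' : j < d := List.mem_range.mp hj
    have : d + 1 - j = (d - j) + 1 := by omega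
    rw [Function.comp_apply, this, Function.iterate_succ_apply']
  · simp


lemma main (N : ℕ) (d : ℕ) (hd : 1 ≤ d) :
    (DeltaP N (N + 1)) ^ d = hatDelta N d * (DeltaP N N) ^ d := by
  induction d with
  | zero => exact absurd hd (by omega)
  | succ d ih =>
    rcases Nat.eq_zero_or_pos d with h0 | h1
    · subst h0
      rw [pow_one, pow_one, hatDelta_one, Delta_top]
    · calc (DeltaP N (N+1))^(d+1) = DeltaP N (N+1) * (DeltaP N (N+1))^d := pow_succ' _ _
        _ = DeltaP N (N+1) * (hatDelta N d * (DeltaP N N)^d) := by rw [ih h1]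
        _ = (DeltaP N (N+1) * hatDelta N d) * (DeltaP N N)^d := (mul_assoc _ _ _).symm
        _ = (flipH N (hatDelta N d) * DeltaP N (N+1)) * (DeltaP N N)^d := by rw [conj']
        _ = flipH N (hatDelta N d) * ((flipH N (deltaFull N) * DeltaP N N) * (DeltaP N N)^d) := by
            rw [mul_assoc, Delta_top]
        _ = (flipH N (hatDelta N d) * flipH N (deltaFull N)) * (DeltaP N N)^(d+1) := by
            rw [mul_assoc (flipH N (deltaFull N)), ← pow_succ', ← mul_assoc]
        _ = hatDelta N (d+1) * (DeltaP N N)^(d+1) := by rw [hatDelta_succ d h1]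

end Dev

/-- in `B_n⁺` (`n = k+2 ≥ 2`), for every `d ≥ 1`,
`Δ_n^d = \widehatΔ_{n,d} · Δ_{n-1}^d`. -/
theorem delta_pow_eq_hatDelta_mul (k d : ℕ) (hd : 1 ≤ d) :
    (DeltaP (k + 1) (k + 2)) ^ d = hatDelta (k + 1) d * (DeltaP (k + 1) (k + 1)) ^ d := Dev.main (k + 1) d hd
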